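/- The form 4x² + 9y² + 9z² + 4xy + 4xz + 2yz (over the integers) fails to represent every odd perfect square m² all of whose prime factors p satisfy p ≡ 1 (mod 4); in particular it does not represent 1, 25, 169, or 625. -/
import Mathlib


-- If -1 is not a square and u^2+v^2=0 with u ≠ 0, contradiction
lemma aux_sq {q : ℕ} [Fact q.Prime] (h3 : q % 4 = 3) {u v : ZMod q}
    (h : u ^ 2 + v ^ 2 = 0) : u = 0 := by
  by_contra hu
  have hns : ¬ IsSquare (-1 : ZMod q) := by
    rw [ZMod.exists_sq_eq_neg_one_iff]; simp [h3]
  exact hns ⟨v * u⁻¹, by field_simp; linear_combination -h⟩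

lemma prime_3mod4_dvd {q : ℕ} (hq : q.Prime) (h3 : q % 4 = 3) {y z : ℤ}
    (h : (q : ℤ) ∣ y ^ 2 + z ^ 2) : (q : ℤ) ∣ y ∧ (q : ℤ) ∣ z := by
  haveI : Fact q.Prime := ⟨hq⟩
  have h' : (y : ZMod q) ^ 2 + (z : ZMod q) ^ 2 = 0 := by
    have := (ZMod.intCast_zmod_eq_zero_iff_dvd _ q).mpr h
    push_cast at this; exact this
  constructor <;> rw [← ZMod.intCast_zmod_eq_zero_iff_dvd]
  · exact aux_sq h3 h'
  · exact aux_sq h3 (v := y) (by linear_combination h')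

lemma all_one_mod_four : ∀ n : ℕ, n % 2 = 1 →
    (∀ p : ℕ, p.Prime → p ∣ n → p % 4 = 1) → n % 4 = 1 := by
  intro n
  induction n using Nat.strong_induction_on with
  | _ n ih =>
    intro hodd h
    rcases eq_or_ne n 1 with rfl | hne
    · rfl
    · obtain ⟨p, hp, k, rfl⟩ : ∃ p, p.Prime ∧ ∃ k, n = p * k := by
        obtain ⟨p, hp, hd⟩ := Nat.exists_prime_and_dvd hne
        exact ⟨p, hp, hd⟩
      have hk0 : k ≠ 0 := by rintro rfl; simp at hodd
      have hkodd : k % 2 = 1 :=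
        Nat.odd_iff.mp ((Nat.odd_mul.mp (Nat.odd_iff.mpr hodd)).2)
      have hklt : k < p * k := by
        nlinarith [hp.two_le, Nat.pos_of_ne_zero hk0]
      have hp4 := h p hp (dvd_mul_right _ _)
      have hk4 := ih k hklt hkodd (fun q hq hqd => h q hq (hqd.mul_left p))
      have := Nat.mul_mod p k 4
      rw [hp4, hk4] at this
      simpa using this

lemma factor_mod4 : ∀ c : ℕ, c % 2 = 1 → ∀ b : ℕ, b % 2 = 1 → ∀ y z : ℤ,
    ((c : ℤ) * b = y ^ 2 + z ^ 2) →
    (∀ q : ℕ, q.Prime → q % 4 = 3 → ¬(q ∣ c ∧ q ∣ b)) → c % 4 = 1 := by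
  intro c
  induction c using Nat.strong_induction_on with
  | _ c ih =>
    intro hc b hb y z heq hq
    by_cases H : ∃ q : ℕ, q.Prime ∧ q % 4 = 3 ∧ q ∣ c
    · obtain ⟨q, hqp, hq3, hqc⟩ := H
      have hqb : ¬ q ∣ b := fun h => hq q hqp hq3 ⟨hqc, h⟩
      have hdvd : (q : ℤ) ∣ y ^ 2 + z ^ 2 :=
        heq ▸ (Dvd.dvd.mul_right (Int.natCast_dvd_natCast.mpr hqc) _)
      obtain ⟨hy, hz⟩ := prime_3mod4_dvd hqp hq3 hdvd
      obtain ⟨y', rfl⟩ := hy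
      obtain ⟨z', rfl⟩ := hz
      have hq2 : q * q ∣ c * b := by
        have : ((q : ℤ) * q) ∣ (c : ℤ) * b := ⟨y' ^ 2 + z' ^ 2, by rw [heq]; ring⟩
        exact_mod_cast this
      have hcop : Nat.Coprime (q * q) b :=
        Nat.Coprime.mul (hqp.coprime_iff_not_dvd.mpr hqb) (hqp.coprime_iff_not_dvd.mpr hqb)
      have hqq_c : q * q ∣ c := (Nat.Coprime.dvd_of_dvd_mul_right hcop hq2)
      obtain ⟨c', rfl⟩ := hqq_c
      have hqodd : q % 2 = 1 := by
        have := hqp.two_le; omega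
      have hc' : c' % 2 = 1 :=
        Nat.odd_iff.mp ((Nat.odd_mul.mp (Nat.odd_iff.mpr hc)).2)
      have hc'pos : 0 < c' := by
        rcases Nat.eq_zero_or_pos c' with rfl | h
        · simp at hc'
        · exact h
      have hlt : c' < q * q * c' := by
        have h4 : 4 ≤ q * q := Nat.mul_le_mul hqp.two_le hqp.two_le
        nlinarith [hc'pos]
      have hq0 : (q : ℤ) ≠ 0 := by exact_mod_cast hqp.pos.ne'
      have heq' : (c' : ℤ) * b = y' ^ 2 + z' ^ 2 := by
        have h2 : (q : ℤ) ^ 2 * ((c' : ℤ) * b) = (q : ℤ) ^ 2 * (y' ^ 2 + z' ^ 2) := by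
          push_cast at heq ⊢
          linear_combination heq
        exact mul_left_cancel₀ (pow_ne_zero 2 hq0) h2
      have hres := ih c' hlt hc' b hb y' z' heq'
        (fun r hr h3 hrb => hq r hr h3 ⟨hrb.1.mul_left _, hrb.2⟩)
      have h1 : q * q % 4 = 1 := by
        have := Nat.mul_mod q q 4; rw [hq3] at this; simpa using this
      have h2 := Nat.mul_mod (q * q) c' 4
      rw [h1, hres] at h2
      simpa using h2
    · push_neg at H
      exact all_one_mod_four c hc (fun p hp hpd => by
        have hpodd : p % 2 = 1 := by
          rcases hp.eq_two_or_odd with rfl | h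
          · obtain ⟨k, rfl⟩ := hpd
            have := Nat.mul_mod 2 k 2
            omega
          · exact h
        have := H p hp
        omega)

lemma half_case {m C D : ℕ} {y z : ℤ} (hm : m = 2 * C + D)
    (hCD : (C : ℤ) * D = y ^ 2 + z ^ 2) (hT : (C * D) % 2 = 1)
    (hmp : ∀ p : ℕ, p.Prime → p ∣ m → p % 4 = 1) (hm2 : m % 2 = 1) : False := by
  have hodd := Nat.odd_mul.mp (Nat.odd_iff.mpr hT)
  have hC : C % 2 = 1 := Nat.odd_iff.mp hodd.1
  have hD : D % 2 = 1 := Nat.odd_iff.mp hodd.2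
  have hsym : ∀ q : ℕ, q.Prime → q % 4 = 3 → ¬(q ∣ C ∧ q ∣ D) := by
    rintro q hq h3 ⟨h4, h5⟩
    have hqm : q ∣ m := hm ▸ dvd_add (h4.mul_left 2) h5
    have := hmp q hq hqm
    omega
  have h1 := factor_mod4 C hC D hD y z hCD hsym
  have h2 := factor_mod4 D hD C hC z y (by linear_combination hCD)
    (fun q hq h3 h45 => hsym q hq h3 ⟨h45.2, h45.1⟩)
  have h3 := all_one_mod_four m hm2 hmp
  omega

lemma jp_main (m : ℕ) (hm : Odd m)
    (hmp : ∀ p : ℕ, p.Prime → p ∣ m → p % 4 = 1) :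
    ¬ ∃ x y z : ℤ, (m : ℤ) ^ 2 =
      4 * x ^ 2 + 9 * y ^ 2 + 9 * z ^ 2 + 4 * x * y + 4 * x * z + 2 * y * z := by
  rintro ⟨x, y, z, hrep⟩
  have hm2 : m % 2 = 1 := Nat.odd_iff.mp hm
  set w : ℤ := 2 * x + y + z with hw
  have key : (m : ℤ) ^ 2 = w ^ 2 + 8 * (y ^ 2 + z ^ 2) := by rw [hrep, hw]; ring
  have hmz : Odd ((m : ℤ) ^ 2) := ((Int.odd_coe_nat m).mpr hm).pow
  have hwodd : Odd w := by
    rcases Int.even_or_odd w with he | ho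
    · exfalso
      have hev : Even ((m : ℤ) ^ 2) := by
        rw [key, sq]
        exact (he.mul_left w).add ⟨4 * (y ^ 2 + z ^ 2), by ring⟩
      exact (Int.not_odd_iff_even.mpr hev) hmz
    · exact ho
  have hyz : Odd (y + z) := by
    have h2x : Even (2 * x) := ⟨x, by ring⟩
    have := hwodd.sub_even h2x
    have heq : w - 2 * x = y + z := by rw [hw]; ring
    rwa [heq] at this
  have htodd : Odd (y ^ 2 + z ^ 2) := by
    rcases Int.even_or_odd y with hy | hy
    · have hz : Odd z := by
        rcases Int.even_or_odd z with h | h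
        · exact absurd hyz (Int.not_odd_iff_even.mpr (hy.add h))
        · exact h
      have hy2 : Even (y ^ 2) := by rw [sq]; exact hy.mul_left y
      exact hy2.add_odd hz.pow
    · have hz : Even z := by
        rcases Int.even_or_odd z with h | h
        · exact h
        · exact absurd hyz (Int.not_odd_iff_even.mpr (Odd.add_odd hy h))
      have hz2 : Even (z ^ 2) := by rw [sq]; exact hz.mul_left z
      exact hy.pow.add_even hz2
  have htpos : 0 < y ^ 2 + z ^ 2 := by
    by_contra h
    push_neg at h
    have h0 : y ^ 2 + z ^ 2 = 0 := le_antisymm h (by positivity)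
    have hy0 : y = 0 := by nlinarith [sq_nonneg y, sq_nonneg z]
    have hz0 : z = 0 := by nlinarith [sq_nonneg y, sq_nonneg z]
    rw [hy0, hz0] at hyz
    norm_num at hyz
  obtain ⟨W, hWcast, hWodd⟩ : ∃ W : ℕ, ((W : ℤ)) ^ 2 = w ^ 2 ∧ W % 2 = 1 :=
    ⟨w.natAbs, by rw [← Int.abs_eq_natAbs, sq_abs],
      Nat.odd_iff.mp (Int.natAbs_odd.mpr hwodd)⟩
  obtain ⟨T, hTcast⟩ : ∃ T : ℕ, (T : ℤ) = y ^ 2 + z ^ 2 :=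
    ⟨(y ^ 2 + z ^ 2).toNat, Int.toNat_of_nonneg (by positivity)⟩
  have keyN : (m : ℤ) ^ 2 = (W : ℤ) ^ 2 + 8 * (T : ℤ) := by
    rw [hWcast, hTcast]; exact key
  have hnat : m ^ 2 = W ^ 2 + 8 * T := by exact_mod_cast keyN
  have hTodd : T % 2 = 1 := by
    have : Odd (T : ℤ) := hTcast ▸ htodd
    exact Nat.odd_iff.mp ((Int.odd_coe_nat T).mp this)
  have hTpos : 0 < T := by
    have : (0 : ℤ) < (T : ℤ) := hTcast ▸ htpos
    exact_mod_cast this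
  have hWlt : W < m := by
    by_contra h
    push_neg at h
    have := Nat.pow_le_pow_left h 2
    omega
  obtain ⟨A, hA⟩ : ∃ A, m = W + 2 * A := ⟨(m - W) / 2, by omega⟩
  obtain ⟨B, hB⟩ : ∃ B, m + W = 2 * B := ⟨(m + W) / 2, by omega⟩
  have hA' : (m : ℤ) = (W : ℤ) + 2 * (A : ℤ) := by exact_mod_cast congrArg (Nat.cast (R := ℤ)) hA
  have hB' : (m : ℤ) + (W : ℤ) = 2 * (B : ℤ) := by exact_mod_cast congrArg (Nat.cast (R := ℤ)) hB
  have hABZ : (4 : ℤ) * ((A : ℤ) * (B : ℤ)) = 4 * (2 * (T : ℤ)) := by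
    linear_combination (-((m : ℤ) + (W : ℤ))) * hA' + (-2 * (A : ℤ)) * hB' + keyN
  have hAB : A * B = 2 * T := by
    have h4 : ((A : ℤ) * (B : ℤ)) = (2 * (T : ℤ)) := mul_left_cancel₀ (by norm_num) hABZ
    exact_mod_cast h4
  rcases Nat.even_or_odd A with hAe | hAo
  · obtain ⟨C, rfl⟩ : ∃ C, A = 2 * C := by obtain ⟨k, hk⟩ := hAe; exact ⟨k, by omega⟩
    have hCB : C * B = T := by
      rw [mul_assoc] at hAB
      exact Nat.eq_of_mul_eq_mul_left (by norm_num) hAB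
    have hCBodd : (C * B) % 2 = 1 := by rw [hCB]; exact hTodd
    have hCBint : (C : ℤ) * B = y ^ 2 + z ^ 2 := by
      have : ((C * B : ℕ) : ℤ) = (T : ℤ) := by exact_mod_cast congrArg (Nat.cast (R := ℤ)) hCB
      push_cast at this
      rw [this, hTcast]
    exact half_case (C := C) (D := B) (by omega) hCBint hCBodd hmp hm2
  · have hBe : B % 2 = 0 := by
      have hAodd := Nat.odd_iff.mp hAo
      -- A*B = 2*T is even, A odd, so B even
      rcases Nat.even_or_odd B with h | h
      · exact Nat.even_iff.mp h
      · exfalso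
        have : Odd (A * B) := hAo.mul h
        rw [hAB] at this
        exact (Nat.not_odd_iff_even.mpr ⟨T, by ring⟩) this
    obtain ⟨C, rfl⟩ : ∃ C, B = 2 * C := ⟨B / 2, by omega⟩
    have hCA : C * A = T := by
      rw [mul_comm A (2 * C), mul_assoc] at hAB
      exact Nat.eq_of_mul_eq_mul_left (by norm_num) hAB
    have hCAodd : (C * A) % 2 = 1 := by rw [hCA]; exact hTodd
    have hCAint : (C : ℤ) * A = y ^ 2 + z ^ 2 := by
      have : ((C * A : ℕ) : ℤ) = (T : ℤ) := by exact_mod_cast congrArg (Nat.cast (R := ℤ)) hCA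
      push_cast at this
      rw [this, hTcast]
    exact half_case (C := C) (D := A) (by omega) hCAint hCAodd hmp hm2

/-- The Jones–Pall form `4x² + 9y² + 9z² + 4xy + 4xz + 2yz` fails to represent every
odd square `m²` all of whose prime factors are `≡ 1 (mod 4)`; in particular it does
not represent `1, 25, 169, 625`. -/
theorem jones_pall_exceptions :
    (∀ m : ℕ, Odd m → (∀ p : ℕ, p.Prime → p ∣ m → p % 4 = 1) →
      ¬ ∃ x y z : ℤ, (m : ℤ) ^ 2 =
        4 * x ^ 2 + 9 * y ^ 2 + 9 * z ^ 2 + 4 * x * y + 4 * x * z + 2 * y * z) ∧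
    (∀ n ∈ ({1, 25, 169, 625} : Set ℤ),
      ¬ ∃ x y z : ℤ, n =
        4 * x ^ 2 + 9 * y ^ 2 + 9 * z ^ 2 + 4 * x * y + 4 * x * z + 2 * y * z) := by
  constructor
  · exact jp_main
  · rintro n hn ⟨x, y, z, h⟩
    simp only [Set.mem_insert_iff, Set.mem_singleton_iff] at hn
    have hp5 : ∀ p : ℕ, p.Prime → p ∣ 5 → p % 4 = 1 := by
      intro p hp hd
      have := (Nat.prime_dvd_prime_iff_eq hp (by norm_num)).mp hd
      subst this; rfl
    rcases hn with rfl | rfl | rfl | rfl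
    · exact jp_main 1 (by decide)
        (fun p hp hd => absurd (Nat.dvd_one.mp hd) hp.ne_one)
        ⟨x, y, z, by norm_num; linarith [h]⟩
    · exact jp_main 5 (by decide) hp5 ⟨x, y, z, by norm_num; linarith [h]⟩
    · exact jp_main 13 (by decide)
        (fun p hp hd => by
          have := (Nat.prime_dvd_prime_iff_eq hp (by norm_num)).mp hd
          subst this; rfl)
        ⟨x, y, z, by norm_num; linarith [h]⟩
    · exact jp_main 25 (by decide)
        (fun p hp hd => by
          have h5 : p ∣ 5 := hp.dvd_of_dvd_pow (n := 2) (by norm_num at hd ⊢; exact hd)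
          exact hp5 p hp h5)
        ⟨x, y, z, by norm_num; linarith [h]⟩
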